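/- Let R : ℝ → ℝ be twice differentiable on the interval (0, 1). Then R satisfies the preference matching differential equation x·R''(x) + 2·R'(x) + 1/x = 0 for all x ∈ (0, 1) if and only if there exist constants C₁, C₂ ∈ ℝ such that R(x) = −log x + C₁ + C₂/x for all x ∈ (0, 1). -/

import Mathlib

/-- A function whose derivative vanishes on `Ioo 0 1` is constant there. -/
lemma const_of_hasDerivAt_zero_Ioo {f : ℝ → ℝ}
    (h : ∀ x ∈ Set.Ioo (0 : ℝ) 1, HasDerivAt f 0 x) :
    ∀ x ∈ Set.Ioo (0 : ℝ) 1, ∀ y ∈ Set.Ioo (0 : ℝ) 1, f x = f y := by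
  intro x hx y hy
  have := (convex_Ioo (0 : ℝ) 1).norm_image_sub_le_of_norm_hasDerivWithin_le
    (f := f) (f' := fun _ => 0) (C := 0)
    (fun z hz => (h z hz).hasDerivWithinAt) (fun z _ => by simp) hy hx
  simp only [zero_mul] at this
  have h0 : ‖f x - f y‖ = 0 := le_antisymm this (norm_nonneg _)
  have := norm_eq_zero.mp h0
  linarith [sub_eq_zero.mp this]

/-- A twice differentiable `R` on `(0,1)` satisfies the preference matching ODE
`x·R''(x) + 2·R'(x) + 1/x = 0` iff `R(x) = -log x + C₁ + C₂/x` on `(0,1)`. -/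
theorem preference_matching_ode_solution
    (R R' R'' : ℝ → ℝ)
    (hR' : ∀ x ∈ Set.Ioo (0 : ℝ) 1, HasDerivAt R (R' x) x)
    (hR'' : ∀ x ∈ Set.Ioo (0 : ℝ) 1, HasDerivAt R' (R'' x) x) :
    (∀ x ∈ Set.Ioo (0 : ℝ) 1, x * R'' x + 2 * R' x + 1 / x = 0) ↔
      ∃ C₁ C₂ : ℝ, ∀ x ∈ Set.Ioo (0 : ℝ) 1, R x = -Real.log x + C₁ + C₂ / x := by
  have hhalf : (1/2 : ℝ) ∈ Set.Ioo (0:ℝ) 1 := by norm_num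
  constructor
  · intro hode
    -- g y = y^2 * R' y + y is constant on (0,1)
    have hgd : ∀ x ∈ Set.Ioo (0:ℝ) 1, HasDerivAt (fun y => y^2 * R' y + y) 0 x := by
      intro x hx
      have hx0 : x ≠ 0 := ne_of_gt hx.1
      have h1 : HasDerivAt (fun y => y^2 * R' y + y)
          ((↑2 * x^(2-1)) * R' x + x^2 * R'' x + 1) x :=
        ((hasDerivAt_pow 2 x).mul (hR'' x hx)).add (hasDerivAt_id x)
      have hode' := hode x hx
      field_simp at hode'
      have heq : (↑2 * x^(2-1)) * R' x + x^2 * R'' x + 1 = 0 := by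
        push_cast
        nlinarith [hode']
      rwa [heq] at h1
    set C : ℝ := (1/2)^2 * R' (1/2) + 1/2 with hC
    have hgC : ∀ x ∈ Set.Ioo (0:ℝ) 1, x^2 * R' x + x = C := by
      intro x hx
      exact const_of_hasDerivAt_zero_Ioo hgd x hx _ hhalf
    have hR'eq : ∀ x ∈ Set.Ioo (0:ℝ) 1, R' x = C / x^2 - 1/x := by
      intro x hx
      have hx0 : x ≠ 0 := ne_of_gt hx.1
      have h2 := hgC x hx
      field_simp
      linear_combination h2
    -- h y = R y + log y + C/y is constant on (0,1)
    have hhd : ∀ x ∈ Set.Ioo (0:ℝ) 1, HasDerivAt (fun y => R y + Real.log y + C/y) 0 x := by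
      intro x hx
      have hx0 : x ≠ 0 := ne_of_gt hx.1
      have hB : HasDerivAt (fun y : ℝ => C/y) (C * (-(x^2)⁻¹)) x := by
        simpa [div_eq_mul_inv] using (hasDerivAt_inv hx0).const_mul C
      have h1 : HasDerivAt (fun y => R y + Real.log y + C/y)
          (R' x + x⁻¹ + C * (-(x^2)⁻¹)) x :=
        ((hR' x hx).add (Real.hasDerivAt_log hx0)).add hB
      have heq : R' x + x⁻¹ + C * (-(x^2)⁻¹) = 0 := by
        rw [hR'eq x hx]; field_simp; ring
      rwa [heq] at h1
    refine ⟨R (1/2) + Real.log (1/2) + C/(1/2), -C, fun x hx => ?_⟩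
    have hx0 : x ≠ 0 := ne_of_gt hx.1
    have h3 : R x + Real.log x + C/x
        = R (1/2) + Real.log (1/2) + C/(1/2) :=
      const_of_hasDerivAt_zero_Ioo hhd x hx _ hhalf
    rw [show -C / x = -(C/x) by ring]
    linarith
  · rintro ⟨C₁, C₂, hRf⟩
    -- First: R' x = -(1/x) - C₂/x^2 on the interval
    have hR'eq : ∀ x ∈ Set.Ioo (0:ℝ) 1, R' x = -(1/x) - C₂/x^2 := by
      intro x hx
      have hx0 : x ≠ 0 := ne_of_gt hx.1
      have hB : HasDerivAt (fun y : ℝ => C₂/y) (C₂ * (-(x^2)⁻¹)) x := by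
        simpa [div_eq_mul_inv] using (hasDerivAt_inv hx0).const_mul C₂
      have h1 : HasDerivAt (fun y => -Real.log y + C₁ + C₂/y)
          (-x⁻¹ + C₂ * (-(x^2)⁻¹)) x :=
        ((Real.hasDerivAt_log hx0).neg.add_const C₁).add hB
      have hF : HasDerivAt (fun y => -Real.log y + C₁ + C₂/y) (-(1/x) - C₂/x^2) x := by
        convert h1 using 1
        field_simp
        ring
      have hmem : Set.Ioo (0:ℝ) 1 ∈ nhds x := (isOpen_Ioo).mem_nhds hx
      have hcong : HasDerivAt R (-(1/x) - C₂/x^2) x :=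
        hF.congr_of_eventuallyEq (Filter.eventuallyEq_of_mem hmem hRf)
      exact (hR' x hx).unique hcong
    have hR''eq : ∀ x ∈ Set.Ioo (0:ℝ) 1, R'' x = 1/x^2 + 2*C₂/x^3 := by
      intro x hx
      have hx0 : x ≠ 0 := ne_of_gt hx.1
      have hA : HasDerivAt (fun y : ℝ => -(1/y)) (-(-(x^2)⁻¹)) x := by
        simpa [one_div, Pi.neg_def] using (hasDerivAt_inv hx0).neg
      have h2 : HasDerivAt (fun y : ℝ => (y^2)⁻¹) (-(↑2 * x^(2-1)) / (x^2)^2) x :=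
        (hasDerivAt_pow 2 x).inv (pow_ne_zero 2 hx0)
      have hB : HasDerivAt (fun y : ℝ => C₂/y^2)
          (C₂ * (-(↑2 * x^(2-1)) / (x^2)^2)) x := by
        simpa [div_eq_mul_inv] using h2.const_mul C₂
      have hF : HasDerivAt (fun y : ℝ => -(1/y) - C₂/y^2) (1/x^2 + 2*C₂/x^3) x := by
        convert (show HasDerivAt (fun y : ℝ => -(1/y) - C₂/y^2) _ x from hA.sub hB) using 1
        push_cast
        field_simp
        ring
      have hmem : Set.Ioo (0:ℝ) 1 ∈ nhds x := (isOpen_Ioo).mem_nhds hx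
      have hcong : HasDerivAt R' (1/x^2 + 2*C₂/x^3) x :=
        hF.congr_of_eventuallyEq (Filter.eventuallyEq_of_mem hmem hR'eq)
      exact (hR'' x hx).unique hcong
    intro x hx
    have hx0 : x ≠ 0 := ne_of_gt hx.1
    rw [hR'eq x hx, hR''eq x hx]
    field_simp
    ring
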